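/- Let H be a partial building set in a geometric lattice L, S ⊆ H, and g ∈ H ∖ S. If S is an antichain with at least two elements, ⋁S ≥ g, and g > h for all but at most one element h ∈ S, then S is not H-nested. -/

import Mathlib

/-- A finite lattice is geometric if it is atomistic and (upper) semimodular. -/
def IsGeomLat (L : Type) [Lattice L] [BoundedOrder L] [Fintype L] : Prop :=
  (∀ x : L, IsLUB {a : L | IsAtom a ∧ a ≤ x} x) ∧
  ∀ a b : L, a ⊓ b ⋖ a → b ⋖ a ⊔ b

/-- The set of factors `F(L,G;x) = max G_{≤x}` of an element `x` with respect to
a subset `G ⊆ L`. -/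
def factorsOf {L : Type} [Lattice L] [BoundedOrder L] (G : Set L) (x : L) : Set L :=
  {g | g ∈ G ∧ g ≤ x ∧ ∀ h ∈ G, h ≤ x → g ≤ h → g = h}

/-- A combinatorial building set in a (geometric) lattice `L`: a set `G` of
elements `> ⊥` such that for each `x > ⊥`, the join map from the product of the
lower intervals `[⊥, g]`, `g ∈ max G_{≤x}`, to `[⊥, x]` is a poset isomorphism
sending the `g`-th "unit vector" to `g`. -/
def IsBuildingSet (L : Type) [Lattice L] [BoundedOrder L] [Fintype L] [DecidableEq L]
    (G : Set L) : Prop :=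
  (∀ g ∈ G, ⊥ < g) ∧
  ∀ x : L, ⊥ < x →
    ∃ φ : ((g : factorsOf G x) → ↥(Set.Iic (g : L))) ≃o ↥(Set.Iic x),
      ∀ g : factorsOf G x,
        φ (fun h => if hh : h = g then ⟨(g : L), by simp [hh]⟩ else ⟨⊥, bot_le⟩) =
          ⟨(g : L), g.2.2.1⟩

/-- A partial building set `H` inside a building set `G`: `H ⊆ G`, `H` contains
all atoms, and the non-atomic part of `H` is an order filter of `G`. -/
def IsPartialBuilding (L : Type) [Lattice L] [BoundedOrder L] [Fintype L] [DecidableEq L]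
    (G H : Set L) : Prop :=
  H ⊆ G ∧ {a : L | IsAtom a} ⊆ H ∧
  ∀ g ∈ H, ¬ IsAtom g → ∀ h ∈ G, g ≤ h → h ∈ H

/-- `N` is `H`-nested: every antichain in `N` with at least two elements has its
join (computed in `L`) outside of `H`. -/
def IsNestedIn (L : Type) [Lattice L] [OrderBot L] (H : Set L) (N : Set L) : Prop :=
  ∀ S : Finset L, ↑S ⊆ N → 2 ≤ S.card → IsAntichain (· ≤ ·) (S : Set L) →
    S.sup id ∉ H

/-- let `H` be a partial building set in a geometric lattice `L`,
`S ⊆ H` and `g ∈ H ∖ S`.  If `S` is an antichain with at least two elements,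
`⋁S ≥ g`, and `g > h` for all but at most one `h ∈ S`, then `S` is not
`H`-nested. -/
theorem not_nested_of_dominated_antichain {L : Type} [Lattice L] [BoundedOrder L]
    [Fintype L] [DecidableEq L] (hgeo : IsGeomLat L) (G : Set L)
    (hG : IsBuildingSet L G) (htop : ⊤ ∈ G) (H : Set L)
    (hH : IsPartialBuilding L G H)
    (S : Finset L) (hSH : ↑S ⊆ H) (g : L) (hg : g ∈ H) (hgS : g ∉ S)
    (hanti : IsAntichain (· ≤ ·) (S : Set L)) (hcard : 2 ≤ S.card)
    (hjoin : g ≤ S.sup id)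
    (hmost : ∃ h₀ : L, ∀ h ∈ S, h ≠ h₀ → h < g) :
    ¬ IsNestedIn L H ↑S := by
  classical
  intro hN
  obtain ⟨h₀', hmost⟩ := hmost
  by_cases hall : ∀ h ∈ S, h < g
  · have hsup : S.sup id = g :=
      le_antisymm (Finset.sup_le fun h hh => (hall h hh).le) hjoin
    exact hN S subset_rfl hcard hanti (hsup ▸ hg)
  push_neg at hall
  obtain ⟨h₀, hh₀S, hh₀g⟩ := hall
  have hdom : ∀ h ∈ S, h ≠ h₀ → h < g := by
    intro h hh hne
    by_cases he : h = h₀'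
    · have hne' : h₀ ≠ h₀' := fun e => hne (he.trans e.symm)
      exact absurd (hmost h₀ hh₀S hne') hh₀g
    · exact hmost h hh he
  set T := S.erase h₀ with hTdef
  have hTS : T ⊆ S := Finset.erase_subset _ _
  have hTg : ∀ h ∈ T, h < g := fun h hh =>
    hdom h (hTS hh) (Finset.ne_of_mem_erase hh)
  have hTcard : T.card = S.card - 1 := Finset.card_erase_of_mem hh₀S
  have hTne : T.Nonempty := by
    rw [← Finset.card_pos, hTcard]; omega
  obtain ⟨h₁, hh₁⟩ := hTne
  have hbotg : ⊥ < g := hG.1 g (hH.1 hg)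
  have hnotatom : ¬ IsAtom g := by
    intro ha
    have hb : ⊥ < h₁ := hG.1 h₁ (hH.1 (hSH (hTS hh₁)))
    have := ha.2 h₁ (hTg h₁ hh₁)
    exact absurd (this ▸ hb) (lt_irrefl ⊥)
  have hy : T.sup id ≤ g := Finset.sup_le fun h hh => (hTg h hh).le
  have hh₀x : h₀ ≤ S.sup id := Finset.le_sup (f := id) hh₀S
  have hx : S.sup id = h₀ ⊔ T.sup id := by
    conv_lhs => rw [← Finset.insert_erase hh₀S]
    rw [Finset.sup_insert]; rfl
  have hxgh : S.sup id = g ⊔ h₀ :=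
    le_antisymm (by rw [hx]; exact sup_le le_sup_right (hy.trans le_sup_left))
      (sup_le hjoin hh₀x)
  set x := S.sup id with hxdef
  have hbotx : ⊥ < x := hbotg.trans_le hjoin
  by_cases hxG : x ∈ G
  · exact hN S subset_rfl hcard hanti (hH.2.2 g hg hnotatom x hxG hjoin)
  obtain ⟨φ, hφ⟩ := hG.2 x hbotx
  have hfac : ∀ a ∈ G, a ≤ x → ∃ f, f ∈ factorsOf G x ∧ a ≤ f := by
    intro a haG hax
    obtain ⟨f, hf, hmax⟩ := Set.Finite.exists_maximalFor id
      {b | (b ∈ G ∧ b ≤ x) ∧ a ≤ b} (Set.toFinite _) ⟨a, ⟨haG, hax⟩, le_refl a⟩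
    exact ⟨f, ⟨hf.1.1, hf.1.2, fun h hhG hhx hfh =>
      le_antisymm hfh (hmax ⟨⟨hhG, hhx⟩, hf.2.trans hfh⟩ hfh)⟩, hf.2⟩
  obtain ⟨f₁, hf₁, hgf₁⟩ := hfac g (hH.1 hg) hjoin
  obtain ⟨f₂, hf₂, hh₀f₂⟩ := hfac h₀ (hH.1 (hSH hh₀S)) hh₀x
  have hne12 : f₁ ≠ f₂ := by
    intro he
    apply hxG
    have hxf : x = f₁ :=
      le_antisymm (by rw [hxgh]; exact sup_le hgf₁ (he ▸ hh₀f₂)) hf₁.2.1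
    exact hxf ▸ hf₁.1
  set F₁ : factorsOf G x := ⟨f₁, hf₁⟩ with hF₁def
  set F₂ : factorsOf G x := ⟨f₂, hf₂⟩ with hF₂def
  have hneF : F₁ ≠ F₂ := fun e => hne12 (congrArg Subtype.val e)
  have he₁ := hφ F₁
  have he₂ := hφ F₂
  set e₁ : (h : factorsOf G x) → ↥(Set.Iic (h : L)) :=
    (fun h => if hh : h = F₁ then ⟨(F₁ : L), by simp [hh]⟩ else ⟨⊥, bot_le⟩) with he₁def
  set e₂ : (h : factorsOf G x) → ↥(Set.Iic (h : L)) :=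
    (fun h => if hh : h = F₂ then ⟨(F₂ : L), by simp [hh]⟩ else ⟨⊥, bot_le⟩) with he₂def
  have hyx : T.sup id ≤ x := hy.trans hjoin
  set w := φ.symm ⟨T.sup id, hyx⟩ with hwdef
  set v := φ.symm ⟨h₀, hh₀x⟩ with hvdef
  have hsymm₁ : φ.symm ⟨f₁, hf₁.2.1⟩ = e₁ := by
    rw [← he₁]; exact φ.symm_apply_apply e₁
  have hsymm₂ : φ.symm ⟨f₂, hf₂.2.1⟩ = e₂ := by
    rw [← he₂]; exact φ.symm_apply_apply e₂
  have hw1 : w ≤ e₁ := by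
    rw [← hsymm₁]
    exact φ.symm.monotone (show (⟨T.sup id, hyx⟩ : Set.Iic x) ≤ ⟨f₁, hf₁.2.1⟩ from
      hy.trans hgf₁)
  have hv2 : v ≤ e₂ := by
    rw [← hsymm₂]
    exact φ.symm.monotone (show (⟨h₀, hh₀x⟩ : Set.Iic x) ≤ ⟨f₂, hf₂.2.1⟩ from hh₀f₂)
  have hwv : w ⊔ v = ⊤ := by
    rw [hwdef, hvdef, ← φ.symm.map_sup]
    have hsup : (⟨T.sup id, hyx⟩ ⊔ ⟨h₀, hh₀x⟩ : Set.Iic x) = ⊤ := by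
      apply Subtype.ext
      show T.sup id ⊔ h₀ = x
      rw [hx, sup_comm]
    rw [hsup, φ.symm.map_top]
  -- components
  have hvF₁ : v F₁ = ⊥ := by
    have h1 : v F₁ ≤ e₂ F₁ := hv2 F₁
    have h2 : e₂ F₁ = ⊥ := by
      rw [he₂def]; simp only [dif_neg hneF]; rfl
    exact le_bot_iff.mp (h2 ▸ h1)
  have hwF₁ : w F₁ = ⊤ := by
    have h1 : (w ⊔ v) F₁ = (⊤ : (h : factorsOf G x) → ↥(Set.Iic (h : L))) F₁ := by
      rw [hwv]
    have h2 : w F₁ ⊔ v F₁ = ⊤ := h1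
    rw [hvF₁, sup_bot_eq] at h2
    exact h2
  have hweq : w = e₁ := by
    funext h
    by_cases hh : h = F₁
    · subst hh
      rw [hwF₁, he₁def]
      simp only [dif_pos rfl]
      rfl
    · have h1 : w h ≤ e₁ h := hw1 h
      have h2 : e₁ h = ⊥ := by rw [he₁def]; simp only [dif_neg hh]; rfl
      rw [h2] at h1
      rw [le_bot_iff.mp h1, h2]
  have hyf₁ : T.sup id = f₁ := by
    have := congrArg φ hweq
    rw [φ.apply_symm_apply, he₁] at this
    exact congrArg Subtype.val this
  have hyg : T.sup id = g := le_antisymm hy (hyf₁ ▸ hgf₁)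
  have hTcard2 : 2 ≤ T.card := by
    rcases Nat.lt_or_ge T.card 2 with hlt | hge
    · exfalso
      have h1 : T.card = 1 := by
        have : 0 < T.card := Finset.card_pos.mpr ⟨h₁, hh₁⟩
        omega
      obtain ⟨a, ha⟩ := Finset.card_eq_one.mp h1
      have : T.sup id = a := by rw [ha]; simp
      have hag : a < g := hTg a (by rw [ha]; exact Finset.mem_singleton_self a)
      rw [this] at hyg
      exact absurd hyg (ne_of_lt hag)
    · exact hge
  exact hN T (Finset.coe_subset.mpr hTS) hTcard2
    (hanti.subset (Finset.coe_subset.mpr hTS)) (hyg ▸ hg)
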